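/- arXiv:1704.08661 — 8 statements merged into one kernel-verified Lean document; each statement's English description precedes it below -/
import Mathlib

section
/- Let T_n be a string of length n over a finite alphabet, T_i its prefix of length i, and ν(T_i) the number of distinct subsequences of T_i that are not subsequences of T_{i-1}. If the last letter t_n does not occur in T_{n-1}, then ν(T_n) = 1 + Σ_{i=1}^{n-1} ν(T_i). -/
/-- Number of distinct nonempty subsequences of a string. -/
def phi {A : Type*} [DecidableEq A] (T : List A) : ℕ :=
  (T.sublists.toFinset.erase []).card

/-- Number of new distinct subsequences contributed by the last letter. -/
def nu {A : Type*} [DecidableEq A] (T : List A) : ℕ :=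
  phi T - phi T.dropLast

lemma phi_mono {A : Type*} [DecidableEq A] {L M : List A} (h : L.Sublist M) :
    phi L ≤ phi M := by
  apply Finset.card_le_card
  apply Finset.erase_subset_erase
  intro s hs
  simp only [List.mem_toFinset, List.mem_sublists] at *
  exact hs.trans h

lemma phi_concat {A : Type*} [DecidableEq A] (L : List A) (a : A) (ha : a ∉ L) :
    phi (L ++ [a]) = 2 * phi L + 1 := by
  classical
  unfold phi
  rw [List.sublists_concat]
  have htf : (L.sublists ++ List.map (fun x => x ++ [a]) L.sublists).toFinset
      = L.sublists.toFinset ∪ (L.sublists.toFinset.image (fun x => x ++ [a])) := by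
    ext s; simp
  rw [htf]
  have hdisj : Disjoint L.sublists.toFinset
      (L.sublists.toFinset.image (fun x => x ++ [a])) := by
    rw [Finset.disjoint_right]
    intro s hs hs'
    simp only [Finset.mem_image, List.mem_toFinset, List.mem_sublists] at hs hs'
    obtain ⟨x, hx, rfl⟩ := hs
    exact ha (hs'.subset (by simp))
  have hne : [] ∉ L.sublists.toFinset.image (fun x => x ++ [a]) := by
    simp only [Finset.mem_image]
    rintro ⟨x, -, hx⟩
    simpa using congrArg List.length hx
  rw [Finset.erase_union_distrib, Finset.erase_eq_of_notMem hne,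
    Finset.card_union_of_disjoint (hdisj.mono_left (Finset.erase_subset _ _))]
  have hcard : (L.sublists.toFinset.image (fun x => x ++ [a])).card
      = L.sublists.toFinset.card := by
    apply Finset.card_image_of_injective
    intro x y hxy
    simpa using hxy
  have hnil : [] ∈ L.sublists.toFinset := by simp
  have : L.sublists.toFinset.card = phi L + 1 := by
    unfold phi
    rw [Finset.card_erase_of_mem hnil]
    have : 1 ≤ L.sublists.toFinset.card := Finset.card_pos.2 ⟨[], hnil⟩
    omega
  rw [hcard, this]
  unfold phi
  ring

lemma tele {f : ℕ → ℕ} (hf : ∀ i, f i ≤ f (i + 1)) (hf0 : f 0 = 0) (m : ℕ) :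
    ∑ i ∈ Finset.Icc 1 m, (f i - f (i - 1)) = f m := by
  induction m with
  | zero => simp [hf0]
  | succ m ih =>
      rw [Finset.sum_Icc_succ_top (by omega)]
      simp only [Nat.add_sub_cancel]
      rw [ih]
      have := hf m
      omega

theorem stmt_1 {A : Type*} [DecidableEq A] [Fintype A] (T : List A)
    (hne : T ≠ []) (hl : T.getLast hne ∉ T.dropLast) :
    nu T = 1 + ∑ i ∈ Finset.Icc 1 (T.length - 1), nu (T.take i) := by
  classical
  set L := T.dropLast with hL
  set a := T.getLast hne with ha
  have hT : L ++ [a] = T := List.dropLast_append_getLast hne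
  have hlen : T.length = L.length + 1 := by
    rw [← hT]; simp
  have hphiT : phi T = 2 * phi L + 1 := by
    rw [← hT]; exact phi_concat L a hl
  have hnuT : nu T = phi L + 1 := by
    unfold nu
    rw [hphiT, ← hL]
    omega
  -- rewrite each nu (T.take i) as f i - f (i-1)
  have htake : ∀ i ∈ Finset.Icc 1 (T.length - 1),
      nu (T.take i) = phi (T.take i) - phi (T.take (i - 1)) := by
    intro i hi
    simp only [Finset.mem_Icc] at hi
    unfold nu
    congr 1
    rw [List.dropLast_eq_take, List.length_take, List.take_take]
    have hT1 : 1 ≤ T.length := List.length_pos_iff.2 (by assumption)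
    have : (i ⊓ T.length - 1) ⊓ i = i - 1 := by omega
    rw [this]
  rw [Finset.sum_congr rfl htake]
  have hmono : ∀ i, phi (T.take i) ≤ phi (T.take (i + 1)) := by
    intro i
    apply phi_mono
    have : T.take i = (T.take (i + 1)).take i := by
      rw [List.take_take]; congr 1; omega
    rw [this]
    exact (List.take_prefix _ _).sublist
  have hf0 : phi (T.take 0) = 0 := by simp [phi]
  rw [tele hmono hf0]
  have : T.take (T.length - 1) = L := (List.dropLast_eq_take (l := T)).symm
  rw [this, hnuT]
  omega
end

section
/- For any string T of length n ≥ 0 over a finite alphabet and any two distinct letters j ≠ k, the number of new distinct subsequences of the string T·j·k (T with j then k appended) equals ν(T·j) + ν(T·k), where ν(W) denotes the number of distinct subsequences of W that are not subsequences of W with its last letter deleted. -/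
namespace StmtAux

open List Finset

variable {A : Type*} [DecidableEq A]

lemma sublist_concat_iff {l T : List A} {x : A} :
    l <+ T ++ [x] ↔ l <+ T ∨ ∃ l', l = l' ++ [x] ∧ l' <+ T := by
  constructor
  · intro h
    obtain ⟨l₁, l₂, rfl, h₁, h₂⟩ := List.sublist_append_iff.1 h
    rcases List.sublist_singleton.1 h₂ with rfl | rfl
    · exact Or.inl (by simpa using h₁)
    · exact Or.inr ⟨l₁, rfl, h₁⟩
  · rintro (h | ⟨l', rfl, h⟩)
    · exact h.trans (List.sublist_append_left _ _)
    · exact h.append (List.Sublist.refl _)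

/-- Finset of nonempty sublists. -/
def F (T : List A) : Finset (List A) := T.sublists.toFinset.erase []

lemma mem_F {S T : List A} : S ∈ F T ↔ S ≠ [] ∧ S <+ T := by
  simp [F, List.mem_sublists, and_comm]

lemma F_subset_concat (T : List A) (x : A) : F T ⊆ F (T ++ [x]) := by
  intro S hS
  rw [mem_F] at hS ⊢
  exact ⟨hS.1, hS.2.trans (List.sublist_append_left _ _)⟩

lemma nu_concat (T : List A) (x : A) :
    nu (T ++ [x]) = ((F (T ++ [x])) \ (F T)).card := by
  have h := Finset.card_sdiff_of_subset (F_subset_concat T x)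
  rw [nu, phi, phi, List.dropLast_concat]
  rw [h]; rfl

/-- The new-sublist set decomposition. -/
lemma key (T : List A) (j k : A) (hjk : j ≠ k) :
    F (T ++ [j] ++ [k]) \ F (T ++ [j]) =
      (F (T ++ [k]) \ F T) ∪ (F (T ++ [j]) \ F T).image (· ++ [k]) := by
  have hTk : T ++ [k] <+ T ++ [j] ++ [k] :=
    (List.sublist_append_left T [j]).append (List.Sublist.refl [k])
  ext S
  simp only [Finset.mem_union, Finset.mem_sdiff, Finset.mem_image, mem_F]
  constructor
  · rintro ⟨⟨hne, hsub⟩, hnot⟩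
    rcases sublist_concat_iff.1 hsub with h | ⟨S', rfl, hS'⟩
    · exact absurd ⟨hne, h⟩ hnot
    · by_cases hS'T : S' <+ T
      · refine Or.inl ⟨⟨hne, hS'T.append (List.Sublist.refl _)⟩, fun hc => ?_⟩
        exact hnot ⟨hne, hc.2.trans (List.sublist_append_left _ _)⟩
      · refine Or.inr ⟨S', ⟨⟨fun h => hS'T (h ▸ List.nil_sublist T), hS'⟩, fun hc => hS'T hc.2⟩, rfl⟩
  · rintro (⟨⟨hne, hsub⟩, hnot⟩ | ⟨S', ⟨⟨hne', hsub'⟩, hnot'⟩, rfl⟩)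
    · refine ⟨⟨hne, hsub.trans hTk⟩, fun hc => ?_⟩
      rcases sublist_concat_iff.1 hc.2 with h | ⟨S', rfl, hS'⟩
      · exact hnot ⟨hne, h⟩
      · rcases sublist_concat_iff.1 hsub with h | ⟨S'', heq, hS''⟩
        · exact hnot ⟨hne, h⟩
        · exact hjk (by simpa using congrArg (fun l => l.getLast?) heq)
    · refine ⟨⟨by simp, hsub'.append (List.Sublist.refl _)⟩, fun hc => ?_⟩
      rcases sublist_concat_iff.1 hc.2 with h | ⟨S'', heq, hS''⟩
      · exact hnot' ⟨hne', (List.sublist_append_left S' [k]).trans h⟩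
      · have : S' = S'' := by simpa using congrArg List.dropLast heq
        exact hnot' ⟨hne', this ▸ hS''⟩

lemma disj (T : List A) (j k : A) (hjk : j ≠ k) :
    Disjoint (F (T ++ [k]) \ F T) ((F (T ++ [j]) \ F T).image (· ++ [k])) := by
  rw [Finset.disjoint_left]
  rintro S hS hS'
  obtain ⟨S', hS'mem, rfl⟩ := Finset.mem_image.1 hS'
  simp only [Finset.mem_sdiff, mem_F] at hS hS'mem
  rcases sublist_concat_iff.1 hS.1.2 with h | ⟨S'', heq, hS''⟩
  · exact hS'mem.2 ⟨hS'mem.1.1, (List.sublist_append_left S' [k]).trans h⟩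
  · have : S' = S'' := by simpa using congrArg List.dropLast heq
    subst this
    exact hS'mem.2 ⟨hS'mem.1.1, hS''⟩

end StmtAux

theorem stmt_3 {A : Type*} [DecidableEq A] [Fintype A]
    (T : List A) (j k : A) (hjk : j ≠ k) :
    nu (T ++ [j, k]) = nu (T ++ [j]) + nu (T ++ [k]) := by
  have h2 : T ++ [j, k] = (T ++ [j]) ++ [k] := by simp
  rw [h2, StmtAux.nu_concat (T ++ [j]) k, StmtAux.nu_concat T j, StmtAux.nu_concat T k,
    StmtAux.key T j k hjk, Finset.card_union_of_disjoint (StmtAux.disj T j k hjk),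
    Finset.card_image_of_injective _ (fun a b h => by simpa using h)]
  ring
end

section
/- For any string T over a finite alphabet and any letter j, the number of new distinct subsequences of T·j·j equals the number of new distinct subsequences of T·j, i.e., ν(T·j·j) = ν(T·j). -/
namespace Stmt4Aux

variable {A : Type*} [DecidableEq A]

/-- The finset of nonempty sublists. -/
def F (T : List A) : Finset (List A) := T.sublists.toFinset.erase []

lemma mem_F {x T : List A} : x ∈ F T ↔ x ≠ [] ∧ x.Sublist T := by
  simp [F, List.mem_sublists]

lemma sublist_concat_iff {l T : List A} {a : A} :
    l.Sublist (T ++ [a]) ↔ l.Sublist T ∨ ∃ r, l = r ++ [a] ∧ r.Sublist T := by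
  constructor
  · intro h
    rcases List.sublist_append_iff.mp h with ⟨l1, l2, he, h1, h2⟩
    rcases (by simpa using h2 : l2 = [] ∨ l2 = [a]) with rfl | rfl
    · left; simpa [he] using h1
    · right; exact ⟨l1, he, h1⟩
  · rintro (h | ⟨r, rfl, hr⟩)
    · exact h.trans (List.sublist_append_left _ _)
    · exact hr.append (List.Sublist.refl _)

lemma F_subset (T : List A) (a : A) : F T ⊆ F (T ++ [a]) := by
  intro x hx
  rw [mem_F] at hx ⊢
  exact ⟨hx.1, hx.2.trans (List.sublist_append_left _ _)⟩

lemma nu_concat (T : List A) (a : A) :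
    nu (T ++ [a]) = (F (T ++ [a]) \ F T).card := by
  rw [nu, List.dropLast_concat, Finset.card_sdiff_of_subset (F_subset T a)]
  rfl

lemma newset_eq (T : List A) (j : A) :
    F (T ++ [j] ++ [j]) \ F (T ++ [j]) =
      Finset.image (fun l => l ++ [j]) (F (T ++ [j]) \ F T) := by
  ext x
  simp only [Finset.mem_sdiff, Finset.mem_image, mem_F]
  constructor
  · rintro ⟨⟨hne, hsub⟩, hnot⟩
    rcases sublist_concat_iff.mp hsub with h | ⟨r, rfl, hr⟩
    · exact absurd ⟨hne, h⟩ hnot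
    · refine ⟨r, ⟨⟨?_, hr⟩, ?_⟩, rfl⟩
      · rintro rfl
        exact hnot ⟨hne, List.sublist_append_right _ _⟩
      · rintro ⟨hrne, hrT⟩
        exact hnot ⟨hne, hrT.append (List.Sublist.refl _)⟩
  · rintro ⟨r, ⟨⟨hrne, hrsub⟩, hnot⟩, rfl⟩
    refine ⟨⟨by simp, hrsub.append (List.Sublist.refl _)⟩, ?_⟩
    rintro ⟨-, hsub⟩
    rcases sublist_concat_iff.mp hsub with h | ⟨s, he, hs⟩
    · -- r ++ [j] <+ T, so r <+ T
      refine hnot ⟨hrne, ?_⟩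
      have := (List.sublist_append_left r [j]).trans h
      exact this
    · have : r = s := by
        have := he
        exact List.append_left_injective [j] this
      subst this
      exact hnot ⟨hrne, hs⟩

end Stmt4Aux

theorem stmt_4 {A : Type*} [DecidableEq A] [Fintype A]
    (T : List A) (j : A) :
    nu (T ++ [j, j]) = nu (T ++ [j]) := by
  have h2 : T ++ [j, j] = (T ++ [j]) ++ [j] := by simp
  rw [h2, Stmt4Aux.nu_concat, Stmt4Aux.nu_concat, Stmt4Aux.newset_eq,
    Finset.card_image_of_injective _ (List.append_left_injective [j])]
end

section
/- Let α ∈ (0,1), set q = √(α(1−α)), and define a_1 = α, b_1 = 1−α, a_{i+1} = a_i + α·b_i, b_{i+1} = b_i + (1−α)·a_i. Then for all i ≥ 1, a_i = (1/2)·((α − q)(1 − q)^{i−1} + (α + q)(1 + q)^{i−1}). -/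
theorem stmt_8 (α : ℝ) (hα : α ∈ Set.Ioo (0:ℝ) 1)
    (q : ℝ) (hq : q = Real.sqrt (α * (1 - α)))
    (a b : ℕ → ℝ)
    (ha1 : a 1 = α) (hb1 : b 1 = 1 - α)
    (ha : ∀ i ≥ 1, a (i + 1) = a i + α * b i)
    (hb : ∀ i ≥ 1, b (i + 1) = b i + (1 - α) * a i) :
    ∀ i ≥ 1, a i = (1 / 2) * ((α - q) * (1 - q) ^ (i - 1) + (α + q) * (1 + q) ^ (i - 1)) := by
  obtain ⟨hα0, hα1⟩ := hα
  have hq2 : q ^ 2 = α * (1 - α) := by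
    rw [hq]; exact Real.sq_sqrt (by nlinarith)
  have key : ∀ n : ℕ,
      a (n + 1) = (1 / 2) * ((α - q) * (1 - q) ^ n + (α + q) * (1 + q) ^ n) ∧
      b (n + 1) = (1 / 2) * (((1 - α) - q) * (1 - q) ^ n + ((1 - α) + q) * (1 + q) ^ n) := by
    intro n
    induction n with
    | zero => constructor <;> simp [ha1, hb1] <;> ring
    | succ n ih =>
      obtain ⟨iha, ihb⟩ := ih
      constructor
      · rw [ha (n + 1) (by omega), iha, ihb]
        linear_combination (-(1 / 2) * ((1 - q) ^ n + (1 + q) ^ n)) * hq2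
      · rw [hb (n + 1) (by omega), iha, ihb]
        linear_combination (-(1 / 2) * ((1 - q) ^ n + (1 + q) ^ n)) * hq2
  intro i hi
  obtain ⟨n, rfl⟩ : ∃ n, i = n + 1 := ⟨i - 1, by omega⟩
  simpa using (key n).1
end

section
/- Let S_n be a random binary string of length n whose letters are i.i.d. with Pr[s_i = 1] = α ∈ (0,1), and let φ(S_n) be the number of distinct nonempty subsequences of S_n. With q = √(α(1−α)), E[φ(S_n)] = [ (1 − 2q)(1 − (1 − q)^n) + (1 + 2q)((1 + q)^n − 1) ] / (2q). -/
open List Finset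

def SF (T : List Bool) : Finset (List Bool) := T.sublists.toFinset

def aF (x : Bool) (T : List Bool) : ℕ :=
  ((SF T).filter (fun l => l.getLast? = some x)).card

lemma nil_mem_SF (T : List Bool) : [] ∈ SF T := by
  simp [SF, List.nil_sublist]

lemma card_SF (T : List Bool) : (SF T).card = phi T + 1 :=
  (Finset.card_erase_add_one (nil_mem_SF T)).symm

lemma ne_nil_iff (l : List Bool) :
    l ≠ [] ↔ (l.getLast? = some true ∨ l.getLast? = some false) := by
  rcases l.eq_nil_or_concat with rfl | ⟨L, b, rfl⟩
  · simp
  · cases b <;> simp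

lemma phi_eq (T : List Bool) : phi T = aF true T + aF false T := by
  have h : (SF T).erase [] = (SF T).filter (fun l => l.getLast? = some true)
      ∪ (SF T).filter (fun l => l.getLast? = some false) := by
    rw [← Finset.filter_or, ← Finset.filter_ne']
    exact Finset.filter_congr (fun l _ => by simpa using ne_nil_iff l)
  have hd : Disjoint ((SF T).filter (fun l => l.getLast? = some true))
      ((SF T).filter (fun l => l.getLast? = some false)) := by
    rw [Finset.disjoint_filter]
    rintro l _ h1 h2
    rw [h1] at h2
    exact Bool.noConfusion (Option.some.inj h2)
  show ((SF T).erase []).card = _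
  rw [h, Finset.card_union_of_disjoint hd]
  rfl

lemma SF_concat (T : List Bool) (x : Bool) :
    SF (T ++ [x]) = SF T ∪ (SF T).image (· ++ [x]) := by
  ext l
  simp [SF, List.sublists_concat]

lemma aF_concat_same (T : List Bool) (x : Bool) : aF x (T ++ [x]) = phi T + 1 := by
  have key : (SF (T ++ [x])).filter (fun l => l.getLast? = some x)
      = (SF T).image (· ++ [x]) := by
    rw [SF_concat, Finset.filter_union]
    have h2 : ((SF T).image (· ++ [x])).filter (fun l => l.getLast? = some x)
        = (SF T).image (· ++ [x]) := by
      apply Finset.filter_true_of_mem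
      intro l hl
      obtain ⟨s, _, rfl⟩ := Finset.mem_image.mp hl
      simp
    rw [h2]
    apply Finset.union_eq_right.mpr
    intro l hl
    obtain ⟨hl1, hl2⟩ := Finset.mem_filter.mp hl
    have := List.dropLast_append_getLast? x hl2
    refine Finset.mem_image.mpr ⟨l.dropLast, ?_, this⟩
    simp only [SF, List.mem_toFinset, List.mem_sublists] at hl1 ⊢
    exact (l.dropLast_sublist).trans hl1
  rw [aF, key, Finset.card_image_of_injective _ (fun a b h => by simpa using h), card_SF]

lemma aF_concat_ne (T : List Bool) (x y : Bool) (h : y ≠ x) :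
    aF x (T ++ [y]) = aF x T := by
  rw [aF, SF_concat, Finset.filter_union]
  have h2 : ((SF T).image (· ++ [y])).filter (fun l => l.getLast? = some x) = ∅ := by
    apply Finset.filter_false_of_mem
    intro l hl
    obtain ⟨s, _, rfl⟩ := Finset.mem_image.mp hl
    simp [h]
  rw [h2, Finset.union_empty]; rfl

noncomputable def wt (α : ℝ) (L : List Bool) : ℝ := α ^ L.count true * (1 - α) ^ L.count false

lemma wt_concat (α : ℝ) (L : List Bool) (x : Bool) :
    wt α (L ++ [x]) = wt α L * (if x = true then α else 1 - α) := by
  cases x <;> simp [wt, List.count_append, pow_succ] <;> ring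

lemma ofFn_snoc {n : ℕ} (T : Fin n → Bool) (x : Bool) :
    List.ofFn (Fin.snoc T x) = List.ofFn T ++ [x] := by
  rw [List.ofFn_succ']
  simp [List.concat_eq_append]

lemma sum_split (n : ℕ) (f : List Bool → ℝ) :
    ∑ T : Fin (n+1) → Bool, f (List.ofFn T)
      = ∑ T : Fin n → Bool,
          (f (List.ofFn T ++ [true]) + f (List.ofFn T ++ [false])) := by
  rw [← (Fin.snocEquiv (fun _ => Bool)).sum_comp (fun T => f (List.ofFn T)),
    Fintype.sum_prod_type, Fintype.sum_bool, ← Finset.sum_add_distrib]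
  apply Finset.sum_congr rfl
  intro T _
  have h : ∀ x : Bool, List.ofFn ((Fin.snocEquiv (fun _ => Bool)) (x, T)) = List.ofFn T ++ [x] :=
    fun x => ofFn_snoc T x
  rw [h, h]

noncomputable def Ec (α : ℝ) (n : ℕ) : ℝ :=
  ∑ T : Fin n → Bool, (phi (List.ofFn T) : ℝ) * wt α (List.ofFn T)

noncomputable def Pc (α : ℝ) (n : ℕ) : ℝ :=
  ∑ T : Fin n → Bool, (aF true (List.ofFn T) : ℝ) * wt α (List.ofFn T)

noncomputable def Qc (α : ℝ) (n : ℕ) : ℝ :=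
  ∑ T : Fin n → Bool, (aF false (List.ofFn T) : ℝ) * wt α (List.ofFn T)

lemma wt_total (α : ℝ) (n : ℕ) : ∑ T : Fin n → Bool, wt α (List.ofFn T) = 1 := by
  induction n with
  | zero => simp [wt]
  | succ n ih =>
      rw [sum_split]
      have : ∀ T : Fin n → Bool,
          wt α (List.ofFn T ++ [true]) + wt α (List.ofFn T ++ [false])
            = wt α (List.ofFn T) := by
        intro T; rw [wt_concat, wt_concat]; simp; ring
      simp only [this]; exact ih

lemma Ec_eq (α : ℝ) (n : ℕ) : Ec α n = Pc α n + Qc α n := by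
  rw [Ec, Pc, Qc, ← Finset.sum_add_distrib]
  apply Finset.sum_congr rfl
  intro T _
  rw [phi_eq]
  push_cast
  ring

lemma phi_concat_true (L : List Bool) :
    (phi (L ++ [true]) : ℝ) = phi L + 1 + aF false L := by
  rw [phi_eq (L ++ [true]), aF_concat_same, aF_concat_ne L false true (by decide)]
  push_cast; ring

lemma phi_concat_false (L : List Bool) :
    (phi (L ++ [false]) : ℝ) = phi L + 1 + aF true L := by
  rw [phi_eq (L ++ [false]), aF_concat_same, aF_concat_ne L true false (by decide)]
  push_cast; ring

lemma Ec_succ (α : ℝ) (n : ℕ) :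
    Ec α (n+1) = Ec α n + (α * Qc α n + (1 - α) * Pc α n) + 1 := by
  have h : Ec α (n+1) = ∑ T : Fin n → Bool,
      ((phi (List.ofFn T) : ℝ) * wt α (List.ofFn T)
        + (α * ((aF false (List.ofFn T) : ℝ) * wt α (List.ofFn T))
            + (1 - α) * ((aF true (List.ofFn T) : ℝ) * wt α (List.ofFn T)))
        + wt α (List.ofFn T)) := by
    have hs : Ec α (n+1) = ∑ T : Fin n → Bool,
        ((phi (List.ofFn T ++ [true]) : ℝ) * wt α (List.ofFn T ++ [true])
          + (phi (List.ofFn T ++ [false]) : ℝ) * wt α (List.ofFn T ++ [false])) := by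
      exact sum_split n (fun L => (phi L : ℝ) * wt α L)
    rw [hs]
    apply Finset.sum_congr rfl
    intro T _
    rw [phi_concat_true, phi_concat_false, wt_concat, wt_concat]
    simp; ring
  rw [h]
  simp only [Finset.sum_add_distrib, ← Finset.mul_sum]
  rw [wt_total]
  rfl

lemma Pc_succ (α : ℝ) (n : ℕ) :
    Pc α (n+1) = α * (Ec α n + 1) + (1 - α) * Pc α n := by
  have h : Pc α (n+1) = ∑ T : Fin n → Bool,
      (α * ((phi (List.ofFn T) : ℝ) * wt α (List.ofFn T) + wt α (List.ofFn T))
        + (1 - α) * ((aF true (List.ofFn T) : ℝ) * wt α (List.ofFn T))) := by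
    have hs : Pc α (n+1) = ∑ T : Fin n → Bool,
        ((aF true (List.ofFn T ++ [true]) : ℝ) * wt α (List.ofFn T ++ [true])
          + (aF true (List.ofFn T ++ [false]) : ℝ) * wt α (List.ofFn T ++ [false])) := by
      exact sum_split n (fun L => (aF true L : ℝ) * wt α L)
    rw [hs]
    apply Finset.sum_congr rfl
    intro T _
    rw [aF_concat_same, aF_concat_ne _ true false (by decide), wt_concat, wt_concat]
    push_cast
    simp; ring
  rw [h]
  simp only [Finset.sum_add_distrib, ← Finset.mul_sum]
  rw [wt_total]
  rfl

lemma Qc_succ (α : ℝ) (n : ℕ) :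
    Qc α (n+1) = (1 - α) * (Ec α n + 1) + α * Qc α n := by
  have h : Qc α (n+1) = ∑ T : Fin n → Bool,
      ((1 - α) * ((phi (List.ofFn T) : ℝ) * wt α (List.ofFn T) + wt α (List.ofFn T))
        + α * ((aF false (List.ofFn T) : ℝ) * wt α (List.ofFn T))) := by
    have hs : Qc α (n+1) = ∑ T : Fin n → Bool,
        ((aF false (List.ofFn T ++ [true]) : ℝ) * wt α (List.ofFn T ++ [true])
          + (aF false (List.ofFn T ++ [false]) : ℝ) * wt α (List.ofFn T ++ [false])) := by
      exact sum_split n (fun L => (aF false L : ℝ) * wt α L)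
    rw [hs]
    apply Finset.sum_congr rfl
    intro T _
    rw [aF_concat_same, aF_concat_ne _ false true (by decide), wt_concat, wt_concat]
    push_cast
    simp; ring
  rw [h]
  simp only [Finset.sum_add_distrib, ← Finset.mul_sum]
  rw [wt_total]
  rfl

theorem stmt_11 (α : ℝ) (hα : α ∈ Set.Ioo (0:ℝ) 1)
    (q : ℝ) (hq : q = Real.sqrt (α * (1 - α))) (n : ℕ) :
    ∑ T : Fin n → Bool,
        (phi (List.ofFn T) : ℝ) * α ^ ((List.ofFn T).count true)
          * (1 - α) ^ ((List.ofFn T).count false) =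
      ((1 - 2 * q) * (1 - (1 - q) ^ n) + (1 + 2 * q) * ((1 + q) ^ n - 1)) / (2 * q) := by
  obtain ⟨h0, h1⟩ := hα
  have hαq : 0 < α * (1 - α) := mul_pos h0 (by linarith)
  have hqpos : 0 < q := hq ▸ Real.sqrt_pos.mpr hαq
  have hq2 : α * (1 - α) = q ^ 2 := by
    rw [hq, Real.sq_sqrt hαq.le]
  have hqne : q ≠ 0 := hqpos.ne'
  set U : ℕ → ℝ := fun n =>
    ((1 - 2 * q) * (1 - (1 - q) ^ n) + (1 + 2 * q) * ((1 + q) ^ n - 1)) / (2 * q) with hU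
  set W : ℕ → ℝ := fun n =>
    ((1 + 2 * q) * ((1 + q) ^ n - 1) - (1 - 2 * q) * (1 - (1 - q) ^ n)) / 2 with hW
  have key : ∀ m : ℕ, Ec α m = U m ∧ α * Qc α m + (1 - α) * Pc α m = W m := by
    intro m
    induction m with
    | zero =>
        have e0 : Ec α 0 = 0 := by simp [Ec, phi]
        have p0 : Pc α 0 = 0 := by simp [Pc, aF, SF]
        have q0 : Qc α 0 = 0 := by simp [Qc, aF, SF]
        rw [e0, p0, q0, hU, hW]
        norm_num
    | succ m ih =>
        obtain ⟨ih1, ih2⟩ := ih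
        have hE := Ec_eq α m
        constructor
        · rw [Ec_succ, ih1, ih2, hU]
          simp only
          rw [pow_succ, pow_succ]
          field_simp
          ring
        · have h2 : α * Qc α (m+1) + (1 - α) * Pc α (m+1)
              = (α * Qc α m + (1 - α) * Pc α m)
                + (α * (1 - α)) * (Ec α m + 2) := by
            rw [Qc_succ, Pc_succ, hE]; ring
          rw [h2, ih1, ih2, hq2, hU, hW]
          simp only
          rw [pow_succ, pow_succ]
          field_simp
          ring
  have hfin : ∀ T : Fin n → Bool,
      (phi (List.ofFn T) : ℝ) * α ^ ((List.ofFn T).count true)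
        * (1 - α) ^ ((List.ofFn T).count false)
      = (phi (List.ofFn T) : ℝ) * wt α (List.ofFn T) := by
    intro T; rw [wt]; ring
  calc ∑ T : Fin n → Bool,
        (phi (List.ofFn T) : ℝ) * α ^ ((List.ofFn T).count true)
          * (1 - α) ^ ((List.ofFn T).count false)
      = Ec α n := Finset.sum_congr rfl (fun T _ => hfin T)
    _ = U n := (key n).1
    _ = _ := rfl
end

section
/- For random binary strings with i.i.d. letters and Pr[s_i=1] = 1/2, the expected number of distinct nonempty subsequences is E[φ(S_n)] = 2·(3/2)^n − 2. -/
namespace StmtAux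

/-- Number of distinct subsequences, including the empty one. -/
def g (T : List Bool) : ℕ := T.sublists.toFinset.card

/-- Number of distinct subsequences starting with the letter `a`. -/
def c (a : Bool) (T : List Bool) : ℕ :=
  (T.sublists.toFinset.filter (fun s => s.head? = some a)).card

lemma nil_mem (T : List Bool) : ([] : List Bool) ∈ T.sublists.toFinset := by
  simp [List.mem_sublists]

lemma phi_add_one (T : List Bool) : phi T + 1 = g T := by
  rw [phi, g, Finset.card_erase_of_mem (nil_mem T)]
  have : 1 ≤ T.sublists.toFinset.card := Finset.card_pos.2 ⟨[], nil_mem T⟩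
  omega

lemma g_split (T : List Bool) : g T = 1 + c false T + c true T := by
  classical
  set S := T.sublists.toFinset with hS
  have h1 : (S.filter (fun s => s.head? = none)).card
      + (S.filter (fun s => ¬ s.head? = none)).card = S.card :=
    Finset.card_filter_add_card_filter_not _
  have h2 : S.filter (fun s => s.head? = none) = {[]} := by
    ext s
    simp only [Finset.mem_filter, Finset.mem_singleton, List.head?_eq_none_iff]
    constructor
    · rintro ⟨-, h⟩; exact h
    · rintro rfl; exact ⟨nil_mem T, rfl⟩
  have h3 : S.filter (fun s => ¬ s.head? = none)
      = S.filter (fun s => s.head? = some false) ∪ S.filter (fun s => s.head? = some true) := by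
    ext s
    simp only [Finset.mem_filter, Finset.mem_union]
    rcases s with _ | ⟨b, t⟩
    · simp
    · cases b <;> simp
  have h4 : Disjoint (S.filter (fun s => s.head? = some false))
      (S.filter (fun s => s.head? = some true)) := by
    rw [Finset.disjoint_filter]
    intro s _ h h'
    rw [h] at h'; simp at h'
  have h5 : (S.filter (fun s => ¬ s.head? = none)).card = c false T + c true T := by
    rw [h3, Finset.card_union_of_disjoint h4]; rfl
  have h6 : (S.filter (fun s => s.head? = none)).card = 1 := by rw [h2]; rfl
  rw [g, ← hS, ← h1, h6, h5]
  ring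

lemma cons_toFinset (a : Bool) (T : List Bool) :
    (a :: T).sublists.toFinset
      = T.sublists.toFinset ∪ T.sublists.toFinset.image (a :: ·) := by
  ext s
  simp only [List.mem_toFinset, List.mem_sublists, Finset.mem_union, Finset.mem_image,
    List.mem_toFinset, List.mem_sublists]
  rw [List.sublist_cons_iff]
  constructor
  · rintro (h | ⟨r, rfl, hr⟩)
    · exact Or.inl h
    · exact Or.inr ⟨r, hr, rfl⟩
  · rintro (h | ⟨r, hr, rfl⟩)
    · exact Or.inl h
    · exact Or.inr ⟨r, rfl, hr⟩

lemma inter_eq (a : Bool) (T : List Bool) :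
    T.sublists.toFinset ∩ T.sublists.toFinset.image (a :: ·)
      = T.sublists.toFinset.filter (fun s => s.head? = some a) := by
  ext s
  simp only [Finset.mem_inter, Finset.mem_image, Finset.mem_filter, List.mem_toFinset,
    List.mem_sublists]
  constructor
  · rintro ⟨hs, r, hr, rfl⟩
    exact ⟨hs, rfl⟩
  · rintro ⟨hs, hh⟩
    rcases s with _ | ⟨b, t⟩
    · simp at hh
    · simp only [List.head?_cons, Option.some.injEq] at hh
      exact ⟨hs, t, (List.tail_sublist (b :: t)).trans hs, by rw [hh]⟩

lemma g_cons_add (a : Bool) (T : List Bool) : g (a :: T) + c a T = 2 * g T := by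
  classical
  unfold g c
  rw [cons_toFinset a T]
  have hcard := Finset.card_union_add_card_inter T.sublists.toFinset
    (T.sublists.toFinset.image (a :: ·))
  rw [inter_eq a T] at hcard
  have himg : (T.sublists.toFinset.image (a :: ·)).card = T.sublists.toFinset.card :=
    Finset.card_image_of_injective _ (List.cons_injective)
  omega

lemma g_cons (a : Bool) (T : List Bool) : g (a :: T) = 1 + g T + c (!a) T := by
  have h1 := g_cons_add a T
  have h2 := g_split T
  cases a <;> simp only [Bool.not_false, Bool.not_true] <;> omega

/-- The sum of g over all binary strings of length n. -/
def A (n : ℕ) : ℕ := ∑ T : Fin n → Bool, g (List.ofFn T)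

lemma sum_pi_succ (F : List Bool → ℕ) (n : ℕ) :
    ∑ T : Fin (n + 1) → Bool, F (List.ofFn T)
      = ∑ p : Bool × (Fin n → Bool), F (p.1 :: List.ofFn p.2) := by
  apply Fintype.sum_equiv (Fin.consEquiv (fun _ : Fin (n + 1) => Bool)).symm
  intro T
  rw [List.ofFn_succ]
  rfl

lemma A_rec (n : ℕ) : A (n + 1) + 2 ^ n = 2 ^ (n + 1) + 3 * A n := by
  have hsum : A (n + 1) = ∑ p : Bool × (Fin n → Bool), g (p.1 :: List.ofFn p.2) :=
    sum_pi_succ g n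
  rw [Fintype.sum_prod_type] at hsum
  have hsum2 : A (n + 1)
      = ∑ a : Bool, ∑ T : Fin n → Bool, (1 + g (List.ofFn T) + c (!a) (List.ofFn T)) := by
    rw [hsum]
    refine Finset.sum_congr rfl fun a _ => Finset.sum_congr rfl fun T _ => g_cons a _
  have hcard : (Finset.univ : Finset (Fin n → Bool)).card = 2 ^ n := by
    simp [Fintype.card_fun]
  have hA : ∀ a : Bool, ∑ T : Fin n → Bool, (1 + g (List.ofFn T) + c (!a) (List.ofFn T))
      = 2 ^ n + A n + ∑ T : Fin n → Bool, c (!a) (List.ofFn T) := by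
    intro a
    rw [Finset.sum_add_distrib, Finset.sum_add_distrib, Finset.sum_const, hcard, smul_eq_mul,
      mul_one, A]
  have hsplit : ∑ T : Fin n → Bool, (c false (List.ofFn T) + c true (List.ofFn T)) + 2 ^ n
      = A n := by
    rw [A, Finset.sum_congr rfl fun (T : Fin n → Bool) (_ : T ∈ Finset.univ) =>
      g_split (List.ofFn T)]
    simp only [Finset.sum_add_distrib, Finset.sum_const, hcard, smul_eq_mul, mul_one]
    ring
  rw [hsum2, Fintype.sum_bool, hA true, hA false, Bool.not_true, Bool.not_false] at *
  rw [Finset.sum_add_distrib] at hsplit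
  omega

lemma A_eq (n : ℕ) : A n + 2 ^ n = 2 * 3 ^ n := by
  induction n with
  | zero => decide
  | succ n ih =>
    have h := A_rec n
    rw [pow_succ, pow_succ] at *
    omega

end StmtAux

theorem stmt_12 (n : ℕ) :
    (∑ T : Fin n → Bool, (phi (List.ofFn T) : ℝ)) / 2 ^ n =
      2 * (3 / 2 : ℝ) ^ n - 2 := by
  have hcard : (Finset.univ : Finset (Fin n → Bool)).card = 2 ^ n := by
    simp [Fintype.card_fun]
  have key : (∑ T : Fin n → Bool, phi (List.ofFn T)) + 2 ^ n + 2 ^ n = 2 * 3 ^ n := by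
    have h1 : ∑ T : Fin n → Bool, (phi (List.ofFn T) + 1) = StmtAux.A n :=
      Finset.sum_congr rfl fun T _ => StmtAux.phi_add_one _
    rw [Finset.sum_add_distrib, Finset.sum_const, hcard, smul_eq_mul, mul_one] at h1
    have := StmtAux.A_eq n
    omega
  have keyR : (∑ T : Fin n → Bool, (phi (List.ofFn T) : ℝ))
      = 2 * 3 ^ n - 2 * 2 ^ n := by
    have := congrArg (fun m : ℕ => (m : ℝ)) key
    push_cast at this
    linarith
  rw [keyR]
  have h2 : (2 : ℝ) ^ n ≠ 0 := by positivity
  field_simp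
  rw [mul_sub, ← mul_pow, show (2 : ℝ) * (3 / 2) = 3 by norm_num]
  ring
end

section
/- Let ψ(n) = E[φ(S_n)] + 1, where S_n is a random string of n i.i.d. letters from alphabet [d] with Pr[s=j] = α_j, and φ counts distinct nonempty subsequences. Then ψ is submultiplicative: ψ(n+m) ≤ ψ(n)·ψ(m) for all n, m ≥ 1. -/
lemma one_add_phi {A : Type*} [DecidableEq A] (T : List A) :
    1 + phi T = T.sublists.toFinset.card := by
  have h : ([] : List A) ∈ T.sublists.toFinset := by simp
  have hpos : 0 < T.sublists.toFinset.card := Finset.card_pos.mpr ⟨[], h⟩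
  unfold phi
  rw [Finset.card_erase_of_mem h]
  omega

lemma phi_append {A : Type*} [DecidableEq A] (S T : List A) :
    1 + phi (S ++ T) ≤ (1 + phi S) * (1 + phi T) := by
  rw [one_add_phi, one_add_phi, one_add_phi]
  calc (S ++ T).sublists.toFinset.card
      ≤ ((S.sublists.toFinset ×ˢ T.sublists.toFinset).image fun p => p.1 ++ p.2).card := by
        apply Finset.card_le_card
        intro x hx
        simp only [List.mem_toFinset, List.mem_sublists] at hx
        rcases List.sublist_append_iff.mp hx with ⟨a, b, rfl, ha, hb⟩
        simp only [Finset.mem_image, Finset.mem_product, List.mem_toFinset, List.mem_sublists,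
          Prod.exists]
        exact ⟨a, b, ⟨ha, hb⟩, rfl⟩
    _ ≤ (S.sublists.toFinset ×ˢ T.sublists.toFinset).card := Finset.card_image_le
    _ = _ := Finset.card_product _ _

lemma sum_prod_eq_one {d : ℕ} (α : Fin d → ℝ) (hsum : ∑ j, α j = 1) :
    ∀ k, ∑ T : Fin k → Fin d, ∏ i, α (T i) = 1 := by
  intro k
  induction k with
  | zero => simp
  | succ k ih =>
    rw [← Fintype.sum_equiv (Fin.consEquiv fun _ : Fin (k + 1) => Fin d)
      (fun p : Fin d × (Fin k → Fin d) => α p.1 * ∏ i, α (p.2 i))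
      (fun T : Fin (k + 1) → Fin d => ∏ i, α (T i)) ?_]
    · rw [Fintype.sum_prod_type]
      simp only [← Finset.mul_sum, ih, mul_one]
      exact hsum
    · intro ⟨x, q⟩
      have : (fun i => α ((Fin.consEquiv fun _ : Fin (k + 1) => Fin d) (x, q) i))
          = Fin.cons (α x) fun i => α (q i) := by
        funext i
        simp [Fin.consEquiv]
        exact congrFun (Fin.comp_cons α x q) i
      simp only [this, Fin.prod_cons]

theorem stmt_15 (d : ℕ) (hd : 0 < d) (α : Fin d → ℝ)
    (hα : ∀ j, 0 ≤ α j) (hsum : ∑ j, α j = 1)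
    (ψ : ℕ → ℝ)
    (hψ : ∀ n, ψ n = 1 + ∑ T : Fin n → Fin d,
        (phi (List.ofFn T) : ℝ) * ∏ i, α (T i)) :
    ∀ n m, 1 ≤ n → 1 ≤ m → ψ (n + m) ≤ ψ n * ψ m := by
  intro n m _ _
  have hw : ∀ k (T : Fin k → Fin d), 0 ≤ ∏ i, α (T i) :=
    fun k T => Finset.prod_nonneg fun i _ => hα _
  set e : ((Fin n → Fin d) × (Fin m → Fin d)) ≃ (Fin (n + m) → Fin d) :=
    (Equiv.sumArrowEquivProdArrow (Fin n) (Fin m) (Fin d)).symm.trans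
      (Equiv.arrowCongr finSumFinEquiv (Equiv.refl (Fin d))) with he_def
  have he_left : ∀ (S : Fin n → Fin d) (U : Fin m → Fin d) (i : Fin n),
      e (S, U) (Fin.castAdd m i) = S i := by
    intro S U i
    simp [he_def, Equiv.sumArrowEquivProdArrow, Equiv.arrowCongr]
  have he_right : ∀ (S : Fin n → Fin d) (U : Fin m → Fin d) (i : Fin m),
      e (S, U) (Fin.natAdd n i) = U i := by
    intro S U i
    simp [he_def, Equiv.sumArrowEquivProdArrow, Equiv.arrowCongr]
  have hofFn : ∀ (S : Fin n → Fin d) (U : Fin m → Fin d),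
      List.ofFn (e (S, U)) = List.ofFn S ++ List.ofFn U := by
    intro S U
    rw [List.ofFn_add]
    congr 1
    · exact congrArg List.ofFn (funext fun i => he_left S U i)
    · exact congrArg List.ofFn (funext fun i => he_right S U i)
  have hprod : ∀ (S : Fin n → Fin d) (U : Fin m → Fin d),
      ∏ i, α (e (S, U) i) = (∏ i, α (S i)) * ∏ i, α (U i) := by
    intro S U
    rw [← Fintype.prod_equiv finSumFinEquiv (fun x => α (e (S, U) (finSumFinEquiv x)))
      (fun i => α (e (S, U) i)) (fun x => rfl)]
    rw [Fintype.prod_sum_type]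
    congr 1
    · exact Finset.prod_congr rfl fun i _ => by rw [finSumFinEquiv_apply_left, he_left]
    · exact Finset.prod_congr rfl fun i _ => by rw [finSumFinEquiv_apply_right, he_right]
  -- rewrite the (n+m) sum as a double sum
  have hsplit : ∑ T : Fin (n + m) → Fin d, (phi (List.ofFn T) : ℝ) * ∏ i, α (T i)
      = ∑ S : Fin n → Fin d, ∑ U : Fin m → Fin d,
        (phi (List.ofFn S ++ List.ofFn U) : ℝ) * ((∏ i, α (S i)) * ∏ i, α (U i)) := by
    rw [← Fintype.sum_equiv e
      (fun p : (Fin n → Fin d) × (Fin m → Fin d) =>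
        (phi (List.ofFn (e p)) : ℝ) * ∏ i, α (e p i))
      (fun T : Fin (n + m) → Fin d => (phi (List.ofFn T) : ℝ) * ∏ i, α (T i))
      (fun p => rfl)]
    rw [Fintype.sum_prod_type]
    exact Finset.sum_congr rfl fun S _ => Finset.sum_congr rfl fun U _ => by
      rw [hofFn, hprod]
  set A := ∑ S : Fin n → Fin d, (phi (List.ofFn S) : ℝ) * ∏ i, α (S i) with hA
  set B := ∑ U : Fin m → Fin d, (phi (List.ofFn U) : ℝ) * ∏ i, α (U i) with hB
  have hA0 : 0 ≤ A := Finset.sum_nonneg fun S _ =>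
    mul_nonneg (Nat.cast_nonneg _) (hw n S)
  have hB0 : 0 ≤ B := Finset.sum_nonneg fun U _ =>
    mul_nonneg (Nat.cast_nonneg _) (hw m U)
  rw [hψ, hψ, hψ, hsplit, ← hA, ← hB]
  have key : ∑ S : Fin n → Fin d, ∑ U : Fin m → Fin d,
      (phi (List.ofFn S ++ List.ofFn U) : ℝ) * ((∏ i, α (S i)) * ∏ i, α (U i))
      ≤ A + B + A * B := by
    have step1 : ∀ (S : Fin n → Fin d) (U : Fin m → Fin d),
        (phi (List.ofFn S ++ List.ofFn U) : ℝ)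
          ≤ (phi (List.ofFn S) : ℝ) + phi (List.ofFn U)
            + phi (List.ofFn S) * phi (List.ofFn U) := by
      intro S U
      have := phi_append (List.ofFn S) (List.ofFn U)
      have : (1 + phi (List.ofFn S ++ List.ofFn U) : ℝ)
          ≤ (1 + phi (List.ofFn S)) * (1 + phi (List.ofFn U)) := by
        exact_mod_cast this
      nlinarith [this]
    calc ∑ S : Fin n → Fin d, ∑ U : Fin m → Fin d,
        (phi (List.ofFn S ++ List.ofFn U) : ℝ) * ((∏ i, α (S i)) * ∏ i, α (U i))
        ≤ ∑ S : Fin n → Fin d, ∑ U : Fin m → Fin d,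
          ((phi (List.ofFn S) : ℝ) + phi (List.ofFn U)
            + phi (List.ofFn S) * phi (List.ofFn U)) * ((∏ i, α (S i)) * ∏ i, α (U i)) := by
          apply Finset.sum_le_sum; intro S _
          apply Finset.sum_le_sum; intro U _
          exact mul_le_mul_of_nonneg_right (step1 S U) (mul_nonneg (hw n S) (hw m U))
      _ = A + B + A * B := by
          have hn1 : ∑ S : Fin n → Fin d, ∏ i, α (S i) = 1 := sum_prod_eq_one α hsum n
          have hm1 : ∑ U : Fin m → Fin d, ∏ i, α (U i) = 1 := sum_prod_eq_one α hsum m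
          have expand : ∀ (S : Fin n → Fin d),
              ∑ U : Fin m → Fin d,
                ((phi (List.ofFn S) : ℝ) + phi (List.ofFn U)
                  + phi (List.ofFn S) * phi (List.ofFn U)) * ((∏ i, α (S i)) * ∏ i, α (U i))
              = (phi (List.ofFn S) : ℝ) * (∏ i, α (S i))
                + (∏ i, α (S i)) * B
                + (phi (List.ofFn S) : ℝ) * (∏ i, α (S i)) * B := by
            intro S
            have h1 : ∀ U : Fin m → Fin d,
                ((phi (List.ofFn S) : ℝ) + phi (List.ofFn U)
                  + phi (List.ofFn S) * phi (List.ofFn U)) * ((∏ i, α (S i)) * ∏ i, α (U i))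
                = (phi (List.ofFn S) : ℝ) * (∏ i, α (S i)) * (∏ i, α (U i))
                  + (∏ i, α (S i)) * ((phi (List.ofFn U) : ℝ) * ∏ i, α (U i))
                  + (phi (List.ofFn S) : ℝ) * (∏ i, α (S i))
                      * ((phi (List.ofFn U) : ℝ) * ∏ i, α (U i)) := fun U => by ring
            rw [Finset.sum_congr rfl fun U _ => h1 U, Finset.sum_add_distrib,
              Finset.sum_add_distrib, ← Finset.mul_sum, ← Finset.mul_sum, ← Finset.mul_sum,
              hm1, mul_one, ← hB]
          rw [Finset.sum_congr rfl fun S _ => expand S, Finset.sum_add_distrib,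
            Finset.sum_add_distrib, ← hA, ← Finset.sum_mul, hn1, one_mul,
            ← Finset.sum_mul, ← hA]
  nlinarith [key]
end

section
/- Let [d] = {1,...,d} with d ≥ 2, and let s_1,...,s_n be i.i.d. letters with Pr[s_i=j] = α_j where max_j α_j < 1. Then the limit c = lim_n (E[φ(S_n)])^{1/n} satisfies c > 1. -/
/-- Number of adjacent disjoint pairs with differing letters. -/
def gcount {A : Type*} [DecidableEq A] : List A → ℕ
  | a :: b :: rest => (if a = b then 0 else 1) + gcount rest
  | _ => 0

/-- Chosen sublists: one letter per adjacent pair. -/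
def subsF {A : Type*} [DecidableEq A] : List A → Finset (List A)
  | a :: b :: rest => ((subsF rest).image (a :: ·)) ∪ ((subsF rest).image (b :: ·))
  | [a] => {[a]}
  | [] => {[]}

lemma subsF_sublist {A : Type*} [DecidableEq A] :
    ∀ (T : List A), ∀ u ∈ subsF T, u.Sublist T ∧ (T ≠ [] → u ≠ []) := by
  intro T
  induction T using subsF.induct with
  | case1 a b rest ih =>
    intro u hu
    simp only [subsF, Finset.mem_union, Finset.mem_image] at hu
    rcases hu with ⟨v, hv, rfl⟩ | ⟨v, hv, rfl⟩
    · exact ⟨List.Sublist.cons₂ a ((ih v hv).1.cons b), fun _ => by simp⟩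
    · exact ⟨List.Sublist.cons a (List.Sublist.cons₂ b (ih v hv).1), fun _ => by simp⟩
  | case2 a => intro u hu; simp [subsF] at hu; subst hu; simp
  | case3 => intro u hu; simp [subsF] at hu; subst hu; simp

lemma subsF_card {A : Type*} [DecidableEq A] :
    ∀ (T : List A), (subsF T).card = 2 ^ gcount T := by
  intro T
  induction T using subsF.induct with
  | case1 a b rest ih =>
    by_cases hab : a = b
    · subst hab
      rw [subsF, Finset.union_self, Finset.card_image_of_injective _ (fun x y => by simp), ih]
      simp [gcount]
    · have hdisj : Disjoint ((subsF rest).image (a :: ·)) ((subsF rest).image (b :: ·)) := by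
        rw [Finset.disjoint_left]
        intro u h1 h2
        simp only [Finset.mem_image] at h1 h2
        obtain ⟨v, _, rfl⟩ := h1
        obtain ⟨w, _, h⟩ := h2
        exact hab (by injection h.symm)
      rw [subsF, Finset.card_union_of_disjoint hdisj,
        Finset.card_image_of_injective _ (fun x y => by simp),
        Finset.card_image_of_injective _ (fun x y => by simp), ih]
      simp [gcount, hab, pow_succ]; ring
  | case2 a => simp [subsF, gcount]
  | case3 => simp [subsF, gcount]

lemma pow_gcount_le_phi {A : Type*} [DecidableEq A] (T : List A) (hT : T ≠ []) :
    2 ^ gcount T ≤ phi T := by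
  rw [← subsF_card T]
  apply Finset.card_le_card
  intro u hu
  obtain ⟨h1, h2⟩ := subsF_sublist T u hu
  simp only [phi, Finset.mem_erase, List.mem_toFinset, List.mem_sublists]
  exact ⟨h2 hT, h1⟩

lemma sum_decomp {d k : ℕ} (F : (Fin (k+1) → Fin d) → ℝ) :
    ∑ T : Fin (k+1) → Fin d, F T = ∑ a : Fin d, ∑ f : Fin k → Fin d, F (Fin.cons a f) := by
  rw [← (Fin.consEquiv (fun _ : Fin (k+1) => Fin d)).sum_comp F, Fintype.sum_prod_type]
  rfl

lemma cons_step {d m : ℕ} (α : Fin d → ℝ) (a b : Fin d) (g : Fin (2*m) → Fin d) :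
    (2:ℝ) ^ gcount (List.ofFn (Fin.cons a (Fin.cons b g) : Fin (2*m+1+1) → Fin d))
      * ∏ i, α ((Fin.cons a (Fin.cons b g) : Fin (2*m+1+1) → Fin d) i)
    = ((if a = b then (1:ℝ) else 2) * (α a * α b)) *
        ((2:ℝ) ^ gcount (List.ofFn g) * ∏ i, α (g i)) := by
  have h1 : List.ofFn (Fin.cons a (Fin.cons b g) : Fin (2*m+1+1) → Fin d)
      = a :: b :: List.ofFn g := by
    simp [List.ofFn_succ, Fin.cons_zero, Fin.cons_succ]
  have h2 : ∏ i, α ((Fin.cons a (Fin.cons b g) : Fin (2*m+1+1) → Fin d) i)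
      = α a * (α b * ∏ i, α (g i)) := by
    rw [Fin.prod_univ_succ, Fin.prod_univ_succ]
    simp [Fin.cons_zero, Fin.cons_succ]
  rw [h1, h2]
  show (2:ℝ) ^ ((if a = b then 0 else 1) + gcount (List.ofFn g)) * _ = _
  rw [pow_add]
  split_ifs <;> norm_num <;> ring

lemma sumB {d : ℕ} (α : Fin d → ℝ) (m : ℕ) :
    ∑ T : Fin (2*m) → Fin d, (2:ℝ) ^ gcount (List.ofFn T) * ∏ i, α (T i)
    = (∑ a : Fin d, ∑ b : Fin d, (if a = b then (1:ℝ) else 2) * (α a * α b)) ^ m := by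
  induction m with
  | zero => simp [gcount, List.ofFn_zero]
  | succ m ih =>
    rw [show 2*(m+1) = (2*m+1)+1 by ring, sum_decomp]
    have step : ∀ a : Fin d,
        ∑ f : Fin (2*m+1) → Fin d,
          (2:ℝ) ^ gcount (List.ofFn (Fin.cons a f : Fin (2*m+1+1) → Fin d))
            * ∏ i, α ((Fin.cons a f : Fin (2*m+1+1) → Fin d) i)
        = (∑ b : Fin d, (if a = b then (1:ℝ) else 2) * (α a * α b)) *
            ∑ g : Fin (2*m) → Fin d, (2:ℝ) ^ gcount (List.ofFn g) * ∏ i, α (g i) := by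
      intro a
      rw [sum_decomp (fun f : Fin (2*m+1) → Fin d =>
            (2:ℝ) ^ gcount (List.ofFn (Fin.cons a f : Fin (2*m+1+1) → Fin d))
              * ∏ i, α ((Fin.cons a f : Fin (2*m+1+1) → Fin d) i)),
        Finset.sum_mul]
      refine Finset.sum_congr rfl fun b _ => ?_
      rw [Finset.mul_sum]
      exact Finset.sum_congr rfl fun g _ => cons_step α a b g
    calc ∑ a : Fin d, ∑ f : Fin (2*m+1) → Fin d,
          (2:ℝ) ^ gcount (List.ofFn (Fin.cons a f : Fin (2*m+1+1) → Fin d))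
            * ∏ i, α ((Fin.cons a f : Fin (2*m+1+1) → Fin d) i)
        = ∑ a : Fin d, (∑ b : Fin d, (if a = b then (1:ℝ) else 2) * (α a * α b)) *
            ∑ g : Fin (2*m) → Fin d, (2:ℝ) ^ gcount (List.ofFn g) * ∏ i, α (g i) :=
          Finset.sum_congr rfl fun a _ => step a
      _ = _ := by rw [← Finset.sum_mul, ih, ← pow_succ']

lemma q_lemma {d : ℕ} (α : Fin d → ℝ) (hα : ∀ j, 0 ≤ α j) (hsum : ∑ j, α j = 1)
    (hmax : ∀ j, α j < 1) :
    1 < ∑ a : Fin d, ∑ b : Fin d, (if a = b then (1:ℝ) else 2) * (α a * α b) := by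
  have e1 : ∀ a : Fin d, ∑ b : Fin d, (if a = b then (1:ℝ) else 2) * (α a * α b)
      = 2 * α a - α a * α a := by
    intro a
    have h : (∑ b : Fin d, (if a = b then (1:ℝ) else 2) * (α a * α b))
        = (∑ b : Fin d, (2 * α a) * α b) - ∑ b : Fin d, (if a = b then α a * α a else 0) := by
      rw [← Finset.sum_sub_distrib]
      refine Finset.sum_congr rfl fun b _ => ?_
      split_ifs with hb
      · subst hb; ring
      · ring
    rw [h, ← Finset.mul_sum, hsum, Finset.sum_ite_eq]
    simp
  have e2 : ∑ a : Fin d, ∑ b : Fin d, (if a = b then (1:ℝ) else 2) * (α a * α b)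
      = 2 - ∑ a : Fin d, α a * α a := by
    rw [Finset.sum_congr rfl fun a _ => e1 a, Finset.sum_sub_distrib, ← Finset.mul_sum, hsum]
    norm_num
  rw [e2]
  have hsq : ∑ a : Fin d, α a * α a < 1 := by
    rw [← hsum]
    have hle1 : ∀ a : Fin d, α a ≤ 1 := fun a =>
      hsum ▸ Finset.single_le_sum (fun j _ => hα j) (Finset.mem_univ a)
    have hex : ∃ a : Fin d, 0 < α a := by
      by_contra h
      push_neg at h
      have : ∑ j, α j ≤ ∑ _j : Fin d, (0:ℝ) := Finset.sum_le_sum fun j _ => h j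
      simp at this
      linarith
    obtain ⟨a0, ha0⟩ := hex
    refine Finset.sum_lt_sum (fun a _ => ?_) ⟨a0, Finset.mem_univ a0, ?_⟩
    · nlinarith [hα a, hle1 a]
    · nlinarith [hmax a0, ha0]
  linarith

theorem stmt_18 (d : ℕ) (hd : 2 ≤ d) (α : Fin d → ℝ)
    (hα : ∀ j, 0 ≤ α j) (hsum : ∑ j, α j = 1) (hmax : ∀ j, α j < 1)
    (ψ : ℕ → ℝ)
    (hψ : ∀ n, ψ n = ∑ T : Fin n → Fin d,
        (phi (List.ofFn T) : ℝ) * ∏ i, α (T i))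
    (c : ℝ)
    (hc : Filter.Tendsto (fun n : ℕ => ψ n ^ ((1 : ℝ) / n)) Filter.atTop (nhds c)) :
    1 < c := by
  set q : ℝ := ∑ a : Fin d, ∑ b : Fin d, (if a = b then (1:ℝ) else 2) * (α a * α b) with hqdef
  have hq : 1 < q := q_lemma α hα hsum hmax
  have hq0 : (0:ℝ) < q := by linarith
  have hψm : ∀ m : ℕ, 1 ≤ m → q ^ m ≤ ψ (2*m) := by
    intro m hm
    rw [hψ (2*m), ← sumB α m]
    refine Finset.sum_le_sum fun T _ => ?_
    have hne : List.ofFn T ≠ [] := by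
      simp only [ne_eq, List.ofFn_eq_nil_iff]
      omega
    have h1 : (2:ℝ) ^ gcount (List.ofFn T) ≤ (phi (List.ofFn T) : ℝ) := by
      exact_mod_cast pow_gcount_le_phi (List.ofFn T) hne
    exact mul_le_mul_of_nonneg_right h1 (Finset.prod_nonneg fun i _ => hα _)
  have h2m : Filter.Tendsto (fun m : ℕ => ψ (2*m) ^ ((1:ℝ)/((2*m : ℕ) : ℝ)))
      Filter.atTop (nhds c) :=
    hc.comp (Filter.tendsto_atTop_atTop.mpr fun b => ⟨b, fun a ha => by omega⟩)
  have hlow : ∀ᶠ m in Filter.atTop, q ^ ((1:ℝ)/2) ≤ ψ (2*m) ^ ((1:ℝ)/((2*m : ℕ) : ℝ)) := by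
    filter_upwards [Filter.eventually_ge_atTop 1] with m hm
    have h2 : q ^ m ≤ ψ (2*m) := hψm m hm
    have h3 : ((q ^ m : ℝ)) ^ ((1:ℝ)/((2*m : ℕ) : ℝ)) ≤ ψ (2*m) ^ ((1:ℝ)/((2*m : ℕ) : ℝ)) :=
      Real.rpow_le_rpow (le_of_lt (pow_pos hq0 m)) h2 (by positivity)
    refine le_trans (le_of_eq ?_) h3
    rw [← Real.rpow_natCast q m, ← Real.rpow_mul (le_of_lt hq0)]
    congr 1
    have hm0 : (m:ℝ) ≠ 0 := Nat.cast_ne_zero.2 (by omega)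
    push_cast
    field_simp
  have hcge : q ^ ((1:ℝ)/2) ≤ c := ge_of_tendsto h2m hlow
  have hgt : 1 < q ^ ((1:ℝ)/2) :=
    (Real.one_lt_rpow_iff_of_pos hq0).mpr (Or.inl ⟨hq, by norm_num⟩)
  linarith
end
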